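/- Under the bounding function assumptions (running cost $c\leq c_c b$, terminal cost $g\leq c_g b$, flow bound $b(\phi_t^\gamma(z))\leq c_\phi b(v)$, jump rate bounded above by $M_\lambda$, survival function $\chi_s^\gamma(z)\leq e^{-\delta s}$), the kernel integral satisfies $\int_\Upsilon B_\zeta(y)\,\mathcal{Q}'(dy\,|\,z,\gamma)\leq B_\zeta(z)\,c_\phi\,\frac{M_\lambda}{\zeta+\delta}$ for every $\zeta>0$, where $B_\zeta(v,d,h)=b(v)e^{\zeta(T-h)}$ and $\mathcal{Q}'(B\times C\times E|z,\gamma)=\int_0^{T-h}\chi_t^\gamma(z)\mathbf{1}_E(h+t)\mathbf{1}_B(\phi_t^\gamma(z))\lambda_d(\phi_t^\gamma(z),\gamma(t))\mathcal{Q}(C|\phi_t^\gamma(z),d,\gamma(t))\,dt$. -/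

import Mathlib

open MeasureTheory

lemma exp_int_le (c a : ℝ) (hc : 0 < c) (ha : 0 ≤ a) :
    ∫ t in (0:ℝ)..a, Real.exp (-c * t) ≤ 1 / c := by
  have h1 : (∫ t in (0:ℝ)..a, Real.exp (-c * t))
      = (-c)⁻¹ • ∫ x in ((-c) * 0)..((-c) * a), Real.exp x := by
    rw [← intervalIntegral.integral_comp_mul_left (fun x => Real.exp x) (by linarith : (-c) ≠ 0)]
  rw [h1, integral_exp]
  have h2 : Real.exp ((-c) * a) ≤ 1 := by
    rw [← Real.exp_zero]
    exact Real.exp_le_exp.mpr (by nlinarith)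
  have h3 : 0 < Real.exp ((-c) * a) := Real.exp_pos _
  rw [smul_eq_mul]
  rw [show (-c) * 0 = (0:ℝ) by ring, Real.exp_zero]
  rw [div_eq_inv_mul]
  have : (-c)⁻¹ = -(c⁻¹) := by field_simp
  rw [this]
  nlinarith [inv_pos.mpr hc]

/-- Bound on the integral of the bounding function `B_ζ` against the stochastic
kernel `Q'` of the imbedded MDP: since `B_ζ(y) = b(v_y) e^{ζ(T-h_y)}` and the
post-jump time is `h + t`, the kernel integral is
`∫_0^{T-h} χ_t λ_t (∑_{r∈D} Q_t({r}) b(φ_t) e^{ζ(T-h-t)}) dt`. -/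
theorem stmt_4
    {H D : Type*} [NormedAddCommGroup H] [Fintype D]
    (T h : ℝ) (hh : h ∈ Set.Icc (0:ℝ) T)
    (b : H → ℝ) (c_φ δ M_lam ζ : ℝ)
    (hcφ : 0 ≤ c_φ) (hδ : 0 < δ) (hδM : δ ≤ M_lam) (hζ : 0 < ζ)
    (v : H) (φ : ℝ → H) (χ lam : ℝ → ℝ) (Q : ℝ → D → ℝ)
    (hb : ∀ x, 0 ≤ b x)
    (hφ : ∀ t ∈ Set.Icc (0:ℝ) T, b (φ t) ≤ c_φ * b v)
    (hlam : ∀ t ∈ Set.Icc (0:ℝ) T, δ ≤ lam t ∧ lam t ≤ M_lam)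
    (hχ : ∀ s ∈ Set.Icc (0:ℝ) T, 0 ≤ χ s ∧ χ s ≤ Real.exp (-δ * s))
    (hQpos : ∀ t r, 0 ≤ Q t r) (hQsum : ∀ t, ∑ r : D, Q t r = 1) :
    (∫ t in (0:ℝ)..(T - h),
        χ t * lam t * ∑ r : D, Q t r * (b (φ t) * Real.exp (ζ * (T - h - t))))
      ≤ (b v * Real.exp (ζ * (T - h))) * (c_φ * (M_lam / (ζ + δ))) := by
  obtain ⟨hh0, hhT⟩ := hh
  set a := T - h with ha_def
  have ha : 0 ≤ a := by simp [ha_def]; linarith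
  have hsub : Set.Icc (0:ℝ) a ⊆ Set.Icc (0:ℝ) T := Set.Icc_subset_Icc le_rfl (by linarith)
  have hM : 0 < M_lam := lt_of_lt_of_le hδ hδM
  -- simplify the sum
  have hsimp : ∀ t, χ t * lam t * ∑ r : D, Q t r * (b (φ t) * Real.exp (ζ * (a - t)))
      = χ t * lam t * (b (φ t) * Real.exp (ζ * (a - t))) := by
    intro t
    rw [← Finset.sum_mul, hQsum t, one_mul]
  set K := M_lam * (c_φ * b v) * Real.exp (ζ * a) with hK
  have hKpos : 0 ≤ K := by
    rw [hK]
    exact mul_nonneg (mul_nonneg hM.le (mul_nonneg hcφ (hb v))) (Real.exp_pos _).le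
  have key : ∀ t ∈ Set.Icc (0:ℝ) a,
      χ t * lam t * (b (φ t) * Real.exp (ζ * (a - t)))
        ≤ K * Real.exp (-(ζ + δ) * t) := by
    intro t ht
    have ht' := hsub ht
    obtain ⟨hχ0, hχe⟩ := hχ t ht'
    obtain ⟨hl1, hl2⟩ := hlam t ht'
    have hbφ := hφ t ht'
    have h1 : χ t * lam t * (b (φ t) * Real.exp (ζ * (a - t)))
        ≤ Real.exp (-δ * t) * M_lam * ((c_φ * b v) * Real.exp (ζ * (a - t))) := by
      have hl0 : 0 ≤ lam t := le_trans hδ.le hl1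
      gcongr <;> first
        | exact hb _
        | exact mul_nonneg (hb _) (Real.exp_pos _).le
        | positivity
    refine h1.trans_eq ?_
    rw [hK]
    rw [show ζ * (a - t) = ζ * a + (-(ζ * t)) by ring, Real.exp_add,
      show -(ζ + δ) * t = -δ * t + (-(ζ * t)) by ring, Real.exp_add]
    ring
  by_cases hInt : IntervalIntegrable
      (fun t => χ t * lam t * ∑ r : D, Q t r * (b (φ t) * Real.exp (ζ * (a - t))))
      volume 0 a
  · have hIntR : IntervalIntegrable (fun t => K * Real.exp (-(ζ + δ) * t)) volume 0 a := by
      apply Continuous.intervalIntegrable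
      continuity
    have hmono : (∫ t in (0:ℝ)..a,
        χ t * lam t * ∑ r : D, Q t r * (b (φ t) * Real.exp (ζ * (a - t))))
        ≤ ∫ t in (0:ℝ)..a, K * Real.exp (-(ζ + δ) * t) := by
      apply intervalIntegral.integral_mono_on ha hInt hIntR
      intro t ht
      rw [hsimp t]
      exact key t ht
    refine hmono.trans ?_
    rw [intervalIntegral.integral_const_mul]
    have hexp := exp_int_le (ζ + δ) a (by linarith) ha
    calc K * ∫ t in (0:ℝ)..a, Real.exp (-(ζ + δ) * t)
        ≤ K * (1 / (ζ + δ)) := by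
          apply mul_le_mul_of_nonneg_left hexp hKpos
      _ = (b v * Real.exp (ζ * a)) * (c_φ * (M_lam / (ζ + δ))) := by
          rw [hK]; field_simp
  · rw [intervalIntegrable_iff_integrableOn_Ioc_of_le ha] at hInt
    rw [intervalIntegral.integral_of_le ha, MeasureTheory.integral_undef hInt]
    have h1 : 0 ≤ b v := hb v
    positivity
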